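/- Let a, b, c be integers with a² - ab + c = -1. Then the graph of f(x) = (x² + bx + c)/(x + a) contains exactly two integral points, namely (-a + 1, b - 2a) and (-a - 1, b - 2a). -/

import Mathlib

/-- If `a^2 - a*b + c = -1`, the graph of `f(x) = (x^2 + b*x + c)/(x + a)` contains exactly
two integral points: `(-a+1, b-2a)` and `(-a-1, b-2a)`. -/
theorem integral_points_of_eq_neg_one
    (a b c : ℤ) (h : a ^ 2 - a * b + c = -1) :
    ({p : ℤ × ℤ | p.1 ≠ -a ∧
        (p.2 : ℝ) = ((p.1 : ℝ) ^ 2 + (b : ℝ) * (p.1 : ℝ) + (c : ℝ)) / ((p.1 : ℝ) + (a : ℝ))}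
      = ({(-a + 1, b - 2 * a), (-a - 1, b - 2 * a)} : Set (ℤ × ℤ))) ∧
    Set.ncard {p : ℤ × ℤ | p.1 ≠ -a ∧
        (p.2 : ℝ) = ((p.1 : ℝ) ^ 2 + (b : ℝ) * (p.1 : ℝ) + (c : ℝ)) / ((p.1 : ℝ) + (a : ℝ))}
      = 2 := by
  have hset : ({p : ℤ × ℤ | p.1 ≠ -a ∧
        (p.2 : ℝ) = ((p.1 : ℝ) ^ 2 + (b : ℝ) * (p.1 : ℝ) + (c : ℝ)) / ((p.1 : ℝ) + (a : ℝ))}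
      = ({(-a + 1, b - 2 * a), (-a - 1, b - 2 * a)} : Set (ℤ × ℤ))) := by
    ext ⟨x, y⟩
    simp only [Set.mem_setOf_eq, Set.mem_insert_iff, Set.mem_singleton_iff, Prod.mk.injEq]
    constructor
    · rintro ⟨hx, hy⟩
      have hne : (x : ℝ) + a ≠ 0 := by
        intro h0
        apply hx
        have : (x : ℝ) = ((-a : ℤ) : ℝ) := by push_cast; linarith
        exact_mod_cast this
      have hz : y * (x + a) = x ^ 2 + b * x + c := by
        have h1 : (y : ℝ) * ((x : ℝ) + a) = (x : ℝ) ^ 2 + b * x + c := by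
          field_simp at hy; linarith
        exact_mod_cast h1
      have hfac : (x + a) * (-(y - (x + b - a))) = 1 := by nlinarith [hz]
      have hcase : x + a = 1 ∨ x + a = -1 := by
        rcases Int.isUnit_iff.mp (IsUnit.of_mul_eq_one _ hfac) with h1 | h1
        · exact Or.inl h1
        · exact Or.inr h1
      rcases hcase with h1 | h1
      · left
        have h2 : -(y - (x + b - a)) = 1 := by rw [h1] at hfac; linarith
        omega
      · right
        have h2 : -(y - (x + b - a)) = -1 := by
          rw [h1] at hfac; linarith
        omega
    · rintro (⟨hx, hy⟩ | ⟨hx, hy⟩) <;> subst hx <;> subst hy <;>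
      refine ⟨by omega, ?_⟩ <;> push_cast <;>
      · have h' : (a : ℝ) ^ 2 - (a : ℝ) * b + c = -1 := by exact_mod_cast h
        rw [eq_div_iff (by nlinarith [h'] : ¬_ = (0:ℝ) )]
        nlinarith [h']
  refine ⟨hset, ?_⟩
  rw [hset]
  rw [Set.ncard_pair (by simp only [ne_eq, Prod.mk.injEq]; omega)]
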